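/- Involution dilogarithm identity: for any d ≥ 1, coefficients z = (z_0,…,z_d) with z_0 = z_d = 1, z_s ≥ 0, and any y > 0: L̃_z(y) + L̃_{z*}(1/y) = L̃_{z*}(∞), where z* is the reverse of z, L̃_z(x) = (1/2)∫₀ˣ (log P_z(t)/t - log(t)·P_z'(t)/P_z(t)) dt, and L̃_{z*}(∞) = lim_{x→∞} L̃_{z*}(x). -/

import Mathlib

open MeasureTheory Real Polynomial Filter

/-- The Rogers dilogarithm of higher degree associated with a polynomial `P`:
`L̃(x) = (1/2)∫₀ˣ (log P(t)/t - log(t)·P'(t)/P(t)) dt`. -/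
noncomputable def Ltil (P : Polynomial ℝ) (x : ℝ) : ℝ :=
  (1/2) * ∫ t in (0:ℝ)..x,
    (Real.log (P.eval t) / t - Real.log t * P.derivative.eval t / P.eval t)

noncomputable def fI (P : Polynomial ℝ) (t : ℝ) : ℝ :=
  Real.log (P.eval t) / t - Real.log t * P.derivative.eval t / P.eval t

lemma intLog (b : ℝ) (hb : 0 ≤ b) : IntervalIntegrable Real.log volume 0 b := by
  have hbnd : IntervalIntegrable (fun t : ℝ => 2 * t ^ (-1/2 : ℝ) + b) volume 0 b :=
    ((intervalIntegral.intervalIntegrable_rpow' (by norm_num)).const_mul 2).add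
      (intervalIntegrable_const)
  refine hbnd.mono_fun Real.measurable_log.aestronglyMeasurable ?_
  rw [Filter.EventuallyLE, ae_restrict_iff' measurableSet_uIoc]
  filter_upwards with t ht
  rw [Set.uIoc_of_le hb] at ht
  obtain ⟨ht0, htb⟩ := ht
  have hrpow : (0:ℝ) ≤ t ^ (-1/2 : ℝ) := Real.rpow_nonneg ht0.le _
  have hbound : |Real.log t| ≤ 2 * t ^ (-1/2 : ℝ) + b := by
    rcases le_or_gt t 1 with h1 | h1
    · have hneg : Real.log t ≤ 0 := Real.log_nonpos ht0.le h1
      rw [abs_of_nonpos hneg]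
      have : -Real.log t = Real.log t⁻¹ := (Real.log_inv t).symm
      rw [this]
      have h2 : Real.log t⁻¹ = 2 * Real.log (t⁻¹ ^ (1/2 : ℝ)) := by
        rw [Real.log_rpow (by positivity)]; ring
      rw [h2]
      have h3 : Real.log (t⁻¹ ^ (1/2:ℝ)) ≤ t⁻¹ ^ (1/2:ℝ) - 1 :=
        Real.log_le_sub_one_of_pos (by positivity)
      have h4 : t⁻¹ ^ (1/2:ℝ) = t ^ (-1/2 : ℝ) := by
        rw [Real.inv_rpow ht0.le, ← Real.rpow_neg ht0.le]
        norm_num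
      nlinarith [hb, hrpow]
    · rw [abs_of_nonneg (Real.log_nonneg h1.le)]
      have := Real.log_le_sub_one_of_pos ht0
      nlinarith [hrpow]
  calc ‖Real.log t‖ = |Real.log t| := rfl
    _ ≤ 2 * t ^ (-1/2:ℝ) + b := hbound
    _ ≤ ‖2 * t ^ (-1/2:ℝ) + b‖ := le_abs_self _

lemma evalGeOne (d : ℕ) (w : ℕ → ℝ) (h0 : w 0 = 1) (hnn : ∀ s, s ≤ d → 0 ≤ w s)
    (t : ℝ) (ht : 0 ≤ t) :
    1 ≤ (∑ s ∈ Finset.range (d + 1), Polynomial.C (w s) * Polynomial.X ^ s).eval t := by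
  rw [Polynomial.eval_finset_sum]
  simp only [Polynomial.eval_mul, Polynomial.eval_C, Polynomial.eval_pow, Polynomial.eval_X]
  have h00 : w 0 * t ^ 0 = 1 := by simp [h0]
  calc (1:ℝ) = w 0 * t ^ 0 := h00.symm
    _ ≤ ∑ s ∈ Finset.range (d + 1), w s * t ^ s := by
        refine Finset.single_le_sum (f := fun s => w s * t ^ s) (fun i hi => ?_) (Finset.mem_range.mpr (Nat.succ_pos d))
        exact mul_nonneg (hnn i (Nat.lt_succ_iff.mp (Finset.mem_range.mp hi))) (pow_nonneg ht i)

lemma contOn_fI (P : Polynomial ℝ) (hpos : ∀ t : ℝ, 0 < t → 0 < P.eval t) :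
    ContinuousOn (fI P) (Set.Ioi 0) := by
  have h1 : ContinuousOn (fun t => Real.log (P.eval t)) (Set.Ioi 0) :=
    Real.continuousOn_log.comp (P.continuous.continuousOn)
      (fun t ht => (hpos t ht).ne')
  have h2 : ContinuousOn Real.log (Set.Ioi 0) :=
    Real.continuousOn_log.mono (fun t ht => ne_of_gt ht)
  exact ((h1.div continuousOn_id (fun t ht => ne_of_gt ht)).sub
    (((h2.mul (P.derivative.continuous.continuousOn))).div (P.continuous.continuousOn)
      (fun t ht => (hpos t ht).ne')))

lemma intI_fI (P : Polynomial ℝ) (hpos : ∀ t : ℝ, 0 ≤ t → 1 ≤ P.eval t)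
    (h0 : P.eval 0 = 1) (b : ℝ) (hb : 0 ≤ b) : IntervalIntegrable (fI P) volume 0 b := by
  have hcoeff : P.coeff 0 = 1 := by rw [Polynomial.coeff_zero_eq_eval_zero, h0]
  -- P.eval t = t * (P.divX.eval t) + 1
  have hfac : ∀ t : ℝ, P.eval t = t * P.divX.eval t + 1 := by
    intro t
    conv_lhs => rw [← Polynomial.divX_mul_X_add P]
    simp [hcoeff, mul_comm]
  -- bound for divX on Icc 0 b
  obtain ⟨C, hC⟩ := (isCompact_Icc (a := (0:ℝ)) (b := b)).exists_bound_of_continuousOn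
    (P.divX.continuous.continuousOn)
  -- first piece: log (P t) / t is bounded on Ioc 0 b
  have hg1 : IntegrableOn (fun t => Real.log (P.eval t) / t) (Set.Ioc 0 b) volume := by
    have hmg : AEStronglyMeasurable (fun t => Real.log (P.eval t) / t)
        (volume.restrict (Set.Ioc 0 b)) := by
      refine ContinuousOn.aestronglyMeasurable ?_ measurableSet_Ioc
      refine ContinuousOn.div ?_ continuousOn_id (fun t ht => ne_of_gt ht.1)
      exact Real.continuousOn_log.comp (P.continuous.continuousOn)
        (fun t ht => by have := hpos t ht.1.le; intro h; rw [h] at this; linarith)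
    refine Integrable.mono' (g := fun _ => C) (integrableOn_const (C := C) measure_Ioc_lt_top.ne) hmg ?_
    rw [ae_restrict_iff' measurableSet_Ioc]
    filter_upwards with t ht
    have h1 : 1 ≤ P.eval t := hpos t ht.1.le
    have hlog0 : 0 ≤ Real.log (P.eval t) := Real.log_nonneg h1
    have hlog1 : Real.log (P.eval t) ≤ P.eval t - 1 :=
      Real.log_le_sub_one_of_pos (by linarith)
    have hdd : P.eval t - 1 = t * P.divX.eval t := by rw [hfac t]; ring
    have hdivnn : 0 ≤ P.divX.eval t := by
      by_contra h
      push_neg at h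
      nlinarith [ht.1]
    calc ‖Real.log (P.eval t) / t‖ = Real.log (P.eval t) / t := by
          rw [Real.norm_eq_abs, abs_of_nonneg (div_nonneg hlog0 ht.1.le)]
      _ ≤ (P.eval t - 1) / t := by gcongr; exact ht.1.le
      _ = P.divX.eval t := by rw [hdd, mul_comm, mul_div_assoc, div_self (ne_of_gt ht.1), mul_one]
      _ ≤ C := by have := hC t ⟨ht.1.le, ht.2⟩; rw [Real.norm_eq_abs] at this
                  exact (le_abs_self _).trans this
  have hg1' : IntervalIntegrable (fun t => Real.log (P.eval t) / t) volume 0 b := by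
    rw [intervalIntegrable_iff, Set.uIoc_of_le hb]; exact hg1
  -- second piece: log t * P' t / P t
  have hg2 : IntervalIntegrable (fun t => Real.log t * P.derivative.eval t / P.eval t)
      volume 0 b := by
    have := (intLog b hb).mul_continuousOn (g := fun t => P.derivative.eval t / P.eval t) ?_
    · refine this.congr ?_
      intro t _; dsimp only
      ring
    · refine ContinuousOn.div (P.derivative.continuous.continuousOn)
        (P.continuous.continuousOn) (fun t ht => ?_)
      rw [Set.uIcc_of_le hb] at ht
      have := hpos t ht.1
      intro h; rw [h] at this; linarith
  exact hg1'.sub hg2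

lemma reflectEval (d : ℕ) (z : ℕ → ℝ) (P Pstar : Polynomial ℝ)
    (hP : P = ∑ s ∈ Finset.range (d + 1), Polynomial.C (z s) * Polynomial.X ^ s)
    (hPstar : Pstar = ∑ s ∈ Finset.range (d + 1), Polynomial.C (z (d - s)) * Polynomial.X ^ s)
    (y : ℝ) (hy : 0 < y) : Pstar.eval (1/y) * y ^ d = P.eval y := by
  subst hP hPstar
  rw [Polynomial.eval_finset_sum, Polynomial.eval_finset_sum]
  simp only [Polynomial.eval_mul, Polynomial.eval_C, Polynomial.eval_pow, Polynomial.eval_X]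
  rw [Finset.sum_mul]
  rw [← Finset.sum_range_reflect (fun s => z s * y ^ s) (d+1)]
  refine Finset.sum_congr rfl (fun s hs => ?_)
  have hsd : s ≤ d := Nat.lt_succ_iff.mp (Finset.mem_range.mp hs)
  have : (1/y) ^ s * y ^ d = y ^ (d - s) := by
    rw [← Nat.sub_add_cancel hsd, pow_add, one_div, inv_pow]
    field_simp
    rw [Nat.add_sub_cancel]
  rw [mul_assoc, this]
  norm_num [Nat.succ_sub_one]

lemma reflectDerivEval (m : ℕ) (P Pstar : Polynomial ℝ)
    (hrefl : ∀ y : ℝ, 0 < y → Pstar.eval (1/y) * y ^ (m+1) = P.eval y)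
    (y : ℝ) (hy : 0 < y) :
    Pstar.derivative.eval (1/y) * y ^ (m+1) =
      ((m+1) * y * P.eval y - y^2 * P.derivative.eval y) := by
  have hy' : y ≠ 0 := hy.ne'
  have hF1 : HasDerivAt (fun x : ℝ => Pstar.eval x⁻¹)
      (Pstar.derivative.eval y⁻¹ * (-(y^2)⁻¹)) y :=
    (Polynomial.hasDerivAt Pstar y⁻¹).comp y (hasDerivAt_inv hy')
  have hF2 : HasDerivAt (fun x : ℝ => P.eval x / x ^ (m+1))
      ((P.derivative.eval y * y ^ (m+1) - P.eval y * ((m+1) * y ^ m)) / (y ^ (m+1))^2) y := by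
    have := (Polynomial.hasDerivAt P y).div (hasDerivAt_pow (m+1) y) (pow_ne_zero _ hy')
    exact this.congr_deriv (by push_cast; simp)
  have heq : (fun x : ℝ => P.eval x / x ^ (m+1)) =ᶠ[nhds y] (fun x : ℝ => Pstar.eval x⁻¹) := by
    filter_upwards [IsOpen.mem_nhds isOpen_Ioi hy] with x hx
    rw [eq_comm, eq_div_iff (pow_ne_zero _ (ne_of_gt hx)), ← hrefl x hx, one_div]
  have hF2' : HasDerivAt (fun x : ℝ => P.eval x / x ^ (m+1))
      (Pstar.derivative.eval y⁻¹ * (-(y^2)⁻¹)) y := hF1.congr_of_eventuallyEq heq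
  have key := hF2'.unique hF2
  have h1 : Pstar.derivative.eval (1/y) = Pstar.derivative.eval y⁻¹ := by rw [one_div]
  rw [h1]
  have hyp : y ^ (m+1) ≠ 0 := pow_ne_zero _ hy'
  field_simp at key
  rw [h1] at key
  apply mul_right_cancel₀ hyp
  linear_combination -key

lemma eval0sum (d : ℕ) (w : ℕ → ℝ) :
    (∑ s ∈ Finset.range (d + 1), Polynomial.C (w s) * Polynomial.X ^ s).eval 0 = w 0 := by
  rw [Polynomial.eval_finset_sum]
  simp only [Polynomial.eval_mul, Polynomial.eval_C, Polynomial.eval_pow, Polynomial.eval_X]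
  rw [Finset.sum_eq_single 0]
  · simp
  · intro b _ hb; simp [zero_pow hb]
  · intro h; exact absurd (Finset.mem_range.mpr (Nat.succ_pos d)) h

lemma hasDerivLtil (P : Polynomial ℝ) (hpos : ∀ t : ℝ, 0 ≤ t → 1 ≤ P.eval t)
    (h0 : P.eval 0 = 1) (y : ℝ) (hy : 0 < y) :
    HasDerivAt (Ltil P) ((1/2) * fI P y) y := by
  have hpos' : ∀ t : ℝ, 0 < t → 0 < P.eval t := fun t ht => lt_of_lt_of_le one_pos (hpos t ht.le)
  have hcont := contOn_fI P hpos'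
  have hd := intervalIntegral.integral_hasDerivAt_right (intI_fI P hpos h0 y hy.le)
    (hcont.stronglyMeasurableAtFilter isOpen_Ioi y hy)
    (hcont.continuousAt (IsOpen.mem_nhds isOpen_Ioi hy))
  exact hd.const_mul (1/2)

lemma hasDerivG (m : ℕ) (P Pstar : Polynomial ℝ)
    (hposP : ∀ t : ℝ, 0 ≤ t → 1 ≤ P.eval t) (h0P : P.eval 0 = 1)
    (hposQ : ∀ t : ℝ, 0 ≤ t → 1 ≤ Pstar.eval t) (h0Q : Pstar.eval 0 = 1)
    (hrefl : ∀ y : ℝ, 0 < y → Pstar.eval (1/y) * y ^ (m+1) = P.eval y)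
    (y : ℝ) (hy : 0 < y) :
    HasDerivAt (fun x => Ltil P x + Ltil Pstar (1/x)) 0 y := by
  have hy' : y ≠ 0 := hy.ne'
  have hy1 : 0 < 1/y := by positivity
  have h1 := hasDerivLtil P hposP h0P y hy
  have h2 := hasDerivLtil Pstar hposQ h0Q (1/y) hy1
  have hinv : HasDerivAt (fun x : ℝ => 1/x) (-(y^2)⁻¹) y := by
    simpa [one_div] using hasDerivAt_inv hy'
  have h3 : HasDerivAt (fun x => Ltil Pstar (1/x))
      ((1/2) * fI Pstar (1/y) * (-(y^2)⁻¹)) y := h2.comp y hinv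
  have hsum := h1.add h3
  refine hsum.congr_deriv (Eq.symm ?_)
  -- algebraic identity
  have hp1 : 1 ≤ P.eval y := hposP y hy.le
  have hp : (0:ℝ) < P.eval y := lt_of_lt_of_le one_pos hp1
  have hyp : (y:ℝ) ^ (m+1) ≠ 0 := pow_ne_zero _ hy'
  have q1 : Pstar.eval (1/y) = P.eval y / y ^ (m+1) := by
    rw [← hrefl y hy, mul_div_assoc, div_self hyp, mul_one]
  have q2 : Pstar.derivative.eval (1/y) =
      ((m+1) * y * P.eval y - y^2 * P.derivative.eval y) / y ^ (m+1) := by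
    rw [← reflectDerivEval m P Pstar hrefl y hy, mul_div_assoc, div_self hyp, mul_one]
  have e1 : Real.log (Pstar.eval (1/y)) = Real.log (P.eval y) - (m+1) * Real.log y := by
    rw [q1, Real.log_div hp.ne' hyp, Real.log_pow]
    push_cast
    ring
  have e2 : Real.log (1/y) = -Real.log y := by rw [one_div, Real.log_inv]
  simp only [fI]
  rw [e1, e2, q1, q2]
  field_simp
  ring

theorem involution_dilogarithm_identity
    (d : ℕ) (hd : 1 ≤ d) (z : ℕ → ℝ)
    (hz0 : z 0 = 1) (hzd : z d = 1) (hznn : ∀ s, s ≤ d → 0 ≤ z s)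
    (P Pstar : Polynomial ℝ)
    (hP : P = ∑ s ∈ Finset.range (d + 1), Polynomial.C (z s) * Polynomial.X ^ s)
    (hPstar : Pstar = ∑ s ∈ Finset.range (d + 1), Polynomial.C (z (d - s)) * Polynomial.X ^ s) :
    ∃ l : ℝ, Tendsto (Ltil Pstar) atTop (nhds l) ∧
      ∀ y : ℝ, 0 < y → Ltil P y + Ltil Pstar (1 / y) = l := by
  obtain ⟨m, rfl⟩ : ∃ m, d = m + 1 := ⟨d - 1, (Nat.succ_pred_eq_of_pos hd).symm⟩
  have hposP : ∀ t : ℝ, 0 ≤ t → 1 ≤ P.eval t := by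
    intro t ht; rw [hP]; exact evalGeOne (m+1) z hz0 hznn t ht
  have hposQ : ∀ t : ℝ, 0 ≤ t → 1 ≤ Pstar.eval t := by
    intro t ht; rw [hPstar]
    refine evalGeOne (m+1) (fun s => z (m+1-s)) (by simpa using hzd) (fun s _ => ?_) t ht
    exact hznn _ (Nat.sub_le _ _)
  have h0P : P.eval 0 = 1 := by rw [hP, eval0sum _ z, hz0]
  have h0Q : Pstar.eval 0 = 1 := by
    rw [hPstar, eval0sum _ (fun s => z (m+1-s))]; simpa using hzd
  have hrefl : ∀ y : ℝ, 0 < y → Pstar.eval (1/y) * y ^ (m+1) = P.eval y :=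
    fun y hy => reflectEval (m+1) z P Pstar hP hPstar y hy
  set G : ℝ → ℝ := fun x => Ltil P x + Ltil Pstar (1/x) with hGdef
  have hG : ∀ y ∈ Set.Ioi (0:ℝ), HasDerivAt G 0 y :=
    fun y hy => hasDerivG m P Pstar hposP h0P hposQ h0Q hrefl y hy
  have hconst : ∀ y : ℝ, 0 < y → G y = G 1 := by
    intro y hy
    refine (convex_Ioi (0:ℝ)).is_const_of_fderivWithin_eq_zero (f := G)
      (fun x hx => (hG x hx).differentiableAt.differentiableWithinAt)
      (fun x hx => ?_) hy (Set.mem_Ioi.mpr one_pos)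
    rw [fderivWithin_of_isOpen isOpen_Ioi hx, (hG x hx).hasFDerivAt.fderiv]
    ext
    simp
  refine ⟨G 1, ?_, fun y hy => hconst y hy⟩
  -- limit
  have hLP0 : Ltil P 0 = 0 := by simp [Ltil]
  have hcw : ContinuousWithinAt (Ltil P) (Set.Icc 0 1) 0 := by
    have hint : IntervalIntegrable (fI P) volume (min 0 0) (max 0 1) := by
      simpa using intI_fI P hposP h0P 1 zero_le_one
    have := intervalIntegral.continuousWithinAt_primitive (μ := volume) (f := fI P)
      (a := 0) (b₀ := 0) (b₁ := 0) (b₂ := 1) (measure_singleton 0) hint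
    exact this.const_mul (1/2)
  have htend1 : Tendsto (fun x : ℝ => 1/x) atTop (nhdsWithin 0 (Set.Icc 0 1)) := by
    rw [tendsto_nhdsWithin_iff]
    constructor
    · simpa [one_div] using tendsto_inv_atTop_zero
    · filter_upwards [eventually_ge_atTop (1:ℝ)] with x hx
      have hx0 : (0:ℝ) < x := lt_of_lt_of_le one_pos hx
      exact ⟨by positivity, by rw [div_le_one hx0]; linarith⟩
  have htend : Tendsto (fun x : ℝ => Ltil P (1/x)) atTop (nhds 0) := by
    have := hcw.tendsto.comp htend1
    rwa [hLP0] at this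
  have heq : (fun x : ℝ => G 1 - Ltil P (1/x)) =ᶠ[atTop] Ltil Pstar := by
    filter_upwards [eventually_gt_atTop (0:ℝ)] with x hx
    have h1x : 0 < 1/x := by positivity
    have := hconst (1/x) h1x
    rw [hGdef] at this
    simp only [one_div_one_div] at this
    simp only [hGdef]
    linarith [this]
  refine Tendsto.congr' heq ?_
  simpa using tendsto_const_nhds.sub htend
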